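/- Under the hypotheses of Theorem 1 (P(x, A\{x}) ≥ cQ(x, A\{x}) off the diagonal, common invariant density ψ, c > 0), for every t ∈ L²(ψ) with E_ψ t = 0 one has ⟨Pt, t⟩_ψ ≤ c⟨Qt, t⟩_ψ + (1−c)σ²_t, where σ²_t = E_ψ t². -/

import Mathlib

open MeasureTheory ProbabilityTheory
open scoped ENNReal

section Aux

variable {X : Type*} [MeasurableSpace X]

private lemma key_identity (ψ : Measure X) [IsProbabilityMeasure ψ]
    (K : Kernel X X) [IsMarkovKernel K]
    (hKinv : ψ.bind (fun x => K x) = ψ)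
    (t : X → ℝ) (hmt : StronglyMeasurable t) (ht : MemLp t 2 ψ) :
    ENNReal.ofReal (2 * (∫ x, t x ^ 2 ∂ψ) - 2 * ∫ x, (∫ y, t y ∂(K x)) * t x ∂ψ)
      = ∫⁻ x, ∫⁻ y, ENNReal.ofReal ((t y - t x) ^ 2) ∂(K x) ∂ψ
    ∧ 0 ≤ 2 * (∫ x, t x ^ 2 ∂ψ) - 2 * ∫ x, (∫ y, t y ∂(K x)) * t x ∂ψ := by
  have hmeas : Measurable t := hmt.measurable
  have hsq_int : Integrable (fun x => t x ^ 2) ψ := ht.integrable_sq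
  have hsq_nn : 0 ≤ᵐ[ψ] fun x => t x ^ 2 := Filter.Eventually.of_forall fun x => sq_nonneg _
  set g2 : X → ℝ≥0∞ := fun x => ∫⁻ y, ENNReal.ofReal (t y ^ 2) ∂(K x) with hg2
  have hofsq_meas : Measurable fun y => ENNReal.ofReal (t y ^ 2) :=
    ENNReal.measurable_ofReal.comp (hmeas.pow_const 2)
  have hg2meas : Measurable g2 :=
    Measurable.lintegral_kernel_prod_right
      (f := fun (_ : X) y => ENNReal.ofReal (t y ^ 2))
      (hofsq_meas.comp measurable_snd)
  have hbind : ∀ {g : X → ℝ≥0∞}, Measurable g →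
      ∫⁻ x, ∫⁻ y, g y ∂(K x) ∂ψ = ∫⁻ x, g x ∂ψ := by
    intro g hg
    conv_rhs => rw [← hKinv, Measure.lintegral_bind K.measurable.aemeasurable hg.aemeasurable]
  have hL : ∫⁻ x, ENNReal.ofReal (t x ^ 2) ∂ψ < ⊤ := hsq_int.lintegral_lt_top
  have hfin : ∀ᵐ x ∂ψ, g2 x < ⊤ := by
    refine ae_lt_top hg2meas ?_
    rw [hg2, hbind hofsq_meas]
    exact hL.ne
  have hmem : ∀ᵐ x ∂ψ, MemLp t 2 (K x) := by
    filter_upwards [hfin] with x hx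
    refine (memLp_two_iff_integrable_sq hmt.aestronglyMeasurable).2 ?_
    refine ⟨(hmt.pow 2).aestronglyMeasurable, ?_⟩
    rw [hasFiniteIntegral_iff_ofReal (Filter.Eventually.of_forall fun y => sq_nonneg _)]
    exact hx
  -- abbreviations
  set A : X → ℝ := fun x => ∫ y, t y ^ 2 ∂(K x) with hA
  set It : X → ℝ := fun x => ∫ y, t y ∂(K x) with hIt
  set C : X → ℝ := fun x => ∫ y, (t y - t x) ^ 2 ∂(K x) with hC
  have Am : StronglyMeasurable A :=
    StronglyMeasurable.integral_kernel_prod_right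
      (f := fun (_ : X) y => t y ^ 2)
      (((hmeas.comp measurable_snd).pow_const 2).stronglyMeasurable)
  have Itm : StronglyMeasurable It :=
    StronglyMeasurable.integral_kernel_prod_right
      (f := fun (_ : X) y => t y)
      ((hmeas.comp measurable_snd).stronglyMeasurable)
  have Cm : StronglyMeasurable C :=
    StronglyMeasurable.integral_kernel_prod_right
      (f := fun (x : X) y => (t y - t x) ^ 2)
      ((((hmeas.comp measurable_snd).sub (hmeas.comp measurable_fst)).pow_const 2).stronglyMeasurable)
  have Ann : ∀ x, 0 ≤ A x := fun x => integral_nonneg fun y => sq_nonneg _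
  have Cnn : ∀ x, 0 ≤ C x := fun x => integral_nonneg fun y => sq_nonneg _
  -- pointwise facts for a.e. x
  have hptwise : ∀ᵐ x ∂ψ,
      C x = A x + t x ^ 2 - 2 * (It x * t x) ∧ (It x) ^ 2 ≤ A x ∧
      ENNReal.ofReal (A x) = g2 x ∧
      ENNReal.ofReal (C x) = ∫⁻ y, ENNReal.ofReal ((t y - t x) ^ 2) ∂(K x) := by
    filter_upwards [hmem] with x hx
    have int_t : Integrable t (K x) := hx.integrable one_le_two
    have int_tsq : Integrable (fun y => t y ^ 2) (K x) := hx.integrable_sq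
    have int_sub : Integrable (fun y => (t y - t x) ^ 2) (K x) :=
      (hx.sub (memLp_const (t x))).integrable_sq
    refine ⟨?_, ?_, ?_, ?_⟩
    · have hexp : C x = ∫ y, (t y ^ 2 - (2 * t x) * t y + t x ^ 2) ∂(K x) :=
        integral_congr_ae (Filter.Eventually.of_forall fun y => by ring)
      have i1 : Integrable (fun y => t y ^ 2 - 2 * t x * t y) (K x) :=
        int_tsq.sub (int_t.const_mul _)
      rw [hexp, integral_add i1 (integrable_const _),
        integral_sub int_tsq (int_t.const_mul _), integral_const_mul _ _, integral_const]
      simp only [measureReal_def, measure_univ, ENNReal.toReal_one, smul_eq_mul, one_mul]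
      ring
    · have hv := variance_nonneg t (K x)
      rw [variance_eq_sub hx] at hv
      simp only [Pi.pow_apply] at hv
      linarith
    · exact ofReal_integral_eq_lintegral_ofReal int_tsq
        (Filter.Eventually.of_forall fun y => sq_nonneg _)
    · exact ofReal_integral_eq_lintegral_ofReal int_sub
        (Filter.Eventually.of_forall fun y => sq_nonneg _)
  -- Integrable A
  have intA : Integrable A ψ := by
    refine ⟨Am.aestronglyMeasurable, ?_⟩
    rw [hasFiniteIntegral_iff_ofReal (Filter.Eventually.of_forall Ann)]
    calc ∫⁻ x, ENNReal.ofReal (A x) ∂ψ = ∫⁻ x, g2 x ∂ψ :=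
          lintegral_congr_ae (hptwise.mono fun x hx => hx.2.2.1)
      _ = ∫⁻ x, ENNReal.ofReal (t x ^ 2) ∂ψ := hbind hofsq_meas
      _ < ⊤ := hL
  -- Integrable B where B x = It x * t x
  have intB : Integrable (fun x => It x * t x) ψ := by
    have iadd : Integrable (fun x => A x + t x ^ 2) ψ := intA.add hsq_int
    refine Integrable.mono' (iadd.div_const 2)
      (Itm.mul hmt).aestronglyMeasurable ?_
    filter_upwards [hptwise] with x hx
    have h1 : (It x) ^ 2 ≤ A x := hx.2.1
    have : |It x * t x| ≤ (A x + t x ^ 2) / 2 := by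
      rw [abs_mul]
      nlinarith [sq_nonneg (|It x| - |t x|), sq_abs (It x), sq_abs (t x), abs_nonneg (It x),
        abs_nonneg (t x)]
    rw [Real.norm_eq_abs]
    exact this
  have intC : Integrable C ψ := by
    have i2 : Integrable (fun x => A x + t x ^ 2 - 2 * (It x * t x)) ψ :=
      (intA.add hsq_int).sub (intB.const_mul 2)
    exact Integrable.congr i2 (hptwise.mono fun x hx => (hx.1).symm)
  -- ∫ A = ∫ t²
  have hAS : ∫ x, A x ∂ψ = ∫ x, t x ^ 2 ∂ψ := by
    have h1 : ENNReal.ofReal (∫ x, A x ∂ψ) = ENNReal.ofReal (∫ x, t x ^ 2 ∂ψ) := by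
      rw [ofReal_integral_eq_lintegral_ofReal intA (Filter.Eventually.of_forall Ann),
        ofReal_integral_eq_lintegral_ofReal hsq_int hsq_nn]
      calc ∫⁻ x, ENNReal.ofReal (A x) ∂ψ = ∫⁻ x, g2 x ∂ψ :=
            lintegral_congr_ae (hptwise.mono fun x hx => hx.2.2.1)
        _ = ∫⁻ x, ENNReal.ofReal (t x ^ 2) ∂ψ := hbind hofsq_meas
    rwa [ENNReal.ofReal_eq_ofReal_iff (integral_nonneg Ann)
      (integral_nonneg fun x => sq_nonneg _)] at h1
  -- ∫ C = 2 ∫ t² − 2 I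
  have hCint : ∫ x, C x ∂ψ
      = 2 * (∫ x, t x ^ 2 ∂ψ) - 2 * ∫ x, It x * t x ∂ψ := by
    have : ∫ x, C x ∂ψ = ∫ x, (A x + t x ^ 2 - 2 * (It x * t x)) ∂ψ :=
      integral_congr_ae (hptwise.mono fun x hx => hx.1)
    have i2 : Integrable (fun x => A x + t x ^ 2) ψ := intA.add hsq_int
    have i3 : Integrable (fun x => 2 * (It x * t x)) ψ := intB.const_mul 2
    rw [this, integral_sub i2 i3, integral_add intA hsq_int, integral_const_mul _ _, hAS]
    ring
  have hD : ENNReal.ofReal (∫ x, C x ∂ψ)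
      = ∫⁻ x, ∫⁻ y, ENNReal.ofReal ((t y - t x) ^ 2) ∂(K x) ∂ψ := by
    rw [ofReal_integral_eq_lintegral_ofReal intC (Filter.Eventually.of_forall Cnn)]
    exact lintegral_congr_ae (hptwise.mono fun x hx => hx.2.2.2)
  constructor
  · rw [← hCint, hD]
  · rw [← hCint]
    exact integral_nonneg Cnn

end Aux
section Aux2
variable {X : Type*} [MeasurableSpace X] [MeasurableSingletonClass X]

private lemma offdiag_lintegral (x : X) (K : Measure X) (f : X → ℝ≥0∞) (hf0 : f x = 0) :
    ∫⁻ y, f y ∂K = ∫⁻ y in {x}ᶜ, f y ∂K := by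
  rw [← lintegral_indicator (measurableSet_singleton x).compl]
  refine lintegral_congr fun y => ?_
  by_cases hy : y = x
  · subst hy; simp [hf0]
  · simp [Set.indicator_apply, hy]

private lemma dom_step (x : X) (Px Qx : Measure X) (c : ℝ)
    (hdom : ∀ A : Set X, MeasurableSet A →
      ENNReal.ofReal c * Qx (A \ {x}) ≤ Px (A \ {x}))
    (f : X → ℝ≥0∞) (hf0 : f x = 0) :
    ENNReal.ofReal c * ∫⁻ y, f y ∂Qx ≤ ∫⁻ y, f y ∂Px := by
  have hmle : (ENNReal.ofReal c) • Qx.restrict {x}ᶜ ≤ Px.restrict {x}ᶜ := by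
    refine Measure.le_iff.2 fun s hs => ?_
    rw [Measure.smul_apply, Measure.restrict_apply hs, Measure.restrict_apply hs, smul_eq_mul]
    simpa [Set.diff_eq] using hdom s hs
  calc ENNReal.ofReal c * ∫⁻ y, f y ∂Qx
      = ENNReal.ofReal c * ∫⁻ y in {x}ᶜ, f y ∂Qx := by rw [offdiag_lintegral x Qx f hf0]
    _ = ∫⁻ y, f y ∂((ENNReal.ofReal c) • Qx.restrict {x}ᶜ) := by rw [lintegral_smul_measure, smul_eq_mul]
    _ ≤ ∫⁻ y in {x}ᶜ, f y ∂Px := lintegral_mono' hmle le_rfl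
    _ = ∫⁻ y, f y ∂Px := (offdiag_lintegral x Px f hf0).symm

end Aux2
section Aux3
variable {X : Type*} [MeasurableSpace X]

-- transfer integrals along a measurable representative, using invariance
private lemma congr_kernel_integral (ψ : Measure X) [IsProbabilityMeasure ψ]
    (K : Kernel X X) [IsMarkovKernel K] (hKinv : ψ.bind (fun x => K x) = ψ)
    (t t' : X → ℝ) (htae : t =ᵐ[ψ] t') :
    ∀ᵐ x ∂ψ, t =ᵐ[K x] t' := by
  have hnull : ψ {x | ¬ t x = t' x} = 0 := htae
  obtain ⟨N, hsub, hNm, hN0⟩ := exists_measurable_superset_of_null hnull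
  have h0 : ∫⁻ x, K x N ∂ψ = 0 := by
    rw [← Measure.bind_apply hNm K.measurable.aemeasurable, hKinv, hN0]
  have hae : ∀ᵐ x ∂ψ, K x N = 0 := by
    have := (lintegral_eq_zero_iff (K.measurable_coe hNm)).1 h0
    filter_upwards [this] with x hx using hx
  filter_upwards [hae] with x hx
  exact measure_mono_null hsub hx

end Aux3

section Main
variable {X : Type*} [MeasurableSpace X] [MeasurableSingletonClass X]

private lemma main_meas (ψ : Measure X) [IsProbabilityMeasure ψ]
    (P Q : Kernel X X) [IsMarkovKernel P] [IsMarkovKernel Q]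
    (hPinv : ψ.bind (fun x => P x) = ψ) (hQinv : ψ.bind (fun x => Q x) = ψ)
    (c : ℝ) (hc : 0 < c)
    (hdom : ∀ᵐ x ∂ψ, ∀ A : Set X, MeasurableSet A →
      ENNReal.ofReal c * Q x (A \ {x}) ≤ P x (A \ {x}))
    (t : X → ℝ) (hmt : StronglyMeasurable t) (ht : MemLp t 2 ψ) :
    (∫ x, (∫ y, t y ∂(P x)) * t x ∂ψ)
      ≤ c * (∫ x, (∫ y, t y ∂(Q x)) * t x ∂ψ) + (1 - c) * ∫ x, (t x) ^ 2 ∂ψ := by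
  obtain ⟨hPid, hPnn⟩ := key_identity ψ P hPinv t hmt ht
  obtain ⟨hQid, hQnn⟩ := key_identity ψ Q hQinv t hmt ht
  have hDge : ENNReal.ofReal c * ∫⁻ x, ∫⁻ y, ENNReal.ofReal ((t y - t x) ^ 2) ∂(Q x) ∂ψ
      ≤ ∫⁻ x, ∫⁻ y, ENNReal.ofReal ((t y - t x) ^ 2) ∂(P x) ∂ψ := by
    rw [← lintegral_const_mul' _ _ ENNReal.ofReal_ne_top]
    refine lintegral_mono_ae ?_
    filter_upwards [hdom] with x hx
    exact dom_step x (P x) (Q x) c hx _ (by simp)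
  rw [← hPid, ← hQid, ← ENNReal.ofReal_mul hc.le] at hDge
  have hle := (ENNReal.ofReal_le_ofReal_iff hPnn).1 hDge
  linarith

end Main

/-- Theorem 1, part 1: if `P(x, A\{x}) ≥ c Q(x, A\{x})` off the diagonal for ψ-a.e. `x`
(common invariant distribution ψ, `c > 0`), then for every mean-zero `t ∈ L²(ψ)`,
`⟨Pt, t⟩_ψ ≤ c⟨Qt, t⟩_ψ + (1−c)σ²_t`. -/
theorem stmt_9 {X : Type*} [MeasurableSpace X] [MeasurableSingletonClass X]
    (ψ : Measure X) [IsProbabilityMeasure ψ]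
    (P Q : Kernel X X) [IsMarkovKernel P] [IsMarkovKernel Q]
    (hPinv : ψ.bind (fun x => P x) = ψ) (hQinv : ψ.bind (fun x => Q x) = ψ)
    (c : ℝ) (hc : 0 < c)
    (hdom : ∀ᵐ x ∂ψ, ∀ A : Set X, MeasurableSet A →
      ENNReal.ofReal c * Q x (A \ {x}) ≤ P x (A \ {x}))
    (t : X → ℝ) (ht : MemLp t 2 ψ) (ht0 : (∫ x, t x ∂ψ) = 0) :
    (∫ x, (∫ y, t y ∂(P x)) * t x ∂ψ)
      ≤ c * (∫ x, (∫ y, t y ∂(Q x)) * t x ∂ψ) + (1 - c) * ∫ x, (t x) ^ 2 ∂ψ := by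
  set t' : X → ℝ := ht.1.mk t with ht'def
  have hmt' : StronglyMeasurable t' := ht.1.stronglyMeasurable_mk
  have htae : t =ᵐ[ψ] t' := ht.1.ae_eq_mk
  have ht' : MemLp t' 2 ψ := ht.ae_eq htae
  have hsq : ∫ x, t x ^ 2 ∂ψ = ∫ x, t' x ^ 2 ∂ψ :=
    integral_congr_ae (htae.mono fun x hx => by show t x ^ 2 = t' x ^ 2; rw [hx])
  have hker : ∀ (K : Kernel X X), IsMarkovKernel K → ψ.bind (fun x => K x) = ψ →
      ∫ x, (∫ y, t y ∂(K x)) * t x ∂ψ = ∫ x, (∫ y, t' y ∂(K x)) * t' x ∂ψ := by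
    intro K _ hKinv
    refine integral_congr_ae ?_
    filter_upwards [congr_kernel_integral ψ K hKinv t t' htae, htae] with x h1 h2
    rw [integral_congr_ae h1, h2]
  rw [hsq, hker P inferInstance hPinv, hker Q inferInstance hQinv]
  exact main_meas ψ P Q hPinv hQinv c hc hdom t' hmt' ht'
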